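/- The sequence c_k is strictly increasing and satisfies 0 < c_k < 1 for every k ≥ 1. -/

import Mathlib

open Real Filter Topology

theorem c_strict_mono_between_zero_one (a : ℕ → ℝ)
    (ha1 : a 1 = Real.sqrt 2)
    (ha : ∀ k ≥ 1, a (k + 1) = Real.sqrt (2 + a k))
    (b : ℕ → ℝ)
    (hb : ∀ k ≥ 1, b k = Real.sqrt (2 - a k) / a (k + 1))
    (c : ℕ → ℝ)
    (hc1 : c 1 = b 1)
    (hc : ∀ k ≥ 1, c (k + 1) = (c k + b (k + 1)) / (1 - c k * b (k + 1))) :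
    (∀ k ≥ 1, c k < c (k + 1)) ∧ (∀ k ≥ 1, 0 < c k ∧ c k < 1) := by
  have h2 : (Real.sqrt 2) ^ 2 = 2 := Real.sq_sqrt (by norm_num)
  -- bounds for a
  have haB : ∀ k ≥ 1, 1 < a k ∧ a k < 2 := by
    intro k hk
    induction k, hk using Nat.le_induction with
    | base =>
      rw [ha1]
      constructor
      · nlinarith [h2, Real.sqrt_nonneg 2]
      · nlinarith [h2, Real.sqrt_nonneg 2]
    | succ n hn ih =>
      rw [ha n hn]
      have hnn : (0:ℝ) ≤ 2 + a n := by linarith [ih.1]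
      have hs := Real.sq_sqrt hnn
      constructor
      · nlinarith [hs, Real.sqrt_nonneg (2 + a n), ih.1]
      · nlinarith [hs, Real.sqrt_nonneg (2 + a n), ih.2]
  have haSq : ∀ k ≥ 1, a (k + 1) ^ 2 = 2 + a k := by
    intro k hk
    rw [ha k hk]
    exact Real.sq_sqrt (by linarith [(haB k hk).1])
  -- bounds for b
  have hbB : ∀ k ≥ 1, 0 < b k ∧ b k < 1 := by
    intro k hk
    have h1 := haB k hk
    have hA1 := haB (k + 1) (by omega)
    rw [hb k hk]
    have hs : 0 < Real.sqrt (2 - a k) := Real.sqrt_pos.2 (by linarith [h1.2])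
    refine ⟨div_pos hs (by linarith [hA1.1]), ?_⟩
    rw [div_lt_one (by linarith [hA1.1]), ha k hk]
    exact Real.sqrt_lt_sqrt (by linarith [h1.2]) (by linarith [h1.1])
  -- key double-angle identity
  have hkey : ∀ k ≥ 1, b k * (1 - b (k + 1) ^ 2) = 2 * b (k + 1) := by
    intro k hk
    have h1 := haB k hk
    have hA1 := haB (k + 1) (by omega)
    have hA2 := haB (k + 2) (by omega)
    have s1 : a (k + 1) ^ 2 = 2 + a k := haSq k hk
    have s2 : a (k + 2) ^ 2 = 2 + a (k + 1) := haSq (k + 1) (by omega)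
    have hAA : Real.sqrt (2 - a k) = a (k + 2) * Real.sqrt (2 - a (k + 1)) := by
      have hfac : 2 - a k = a (k + 2) ^ 2 * (2 - a (k + 1)) := by
        linear_combination (a (k + 1) - 2) * s2 + s1
      rw [hfac, Real.sqrt_mul (by positivity) _, Real.sqrt_sq (by linarith [hA2.1])]
    have hs' : Real.sqrt (2 - a (k + 1)) ^ 2 = 2 - a (k + 1) :=
      Real.sq_sqrt (by linarith [hA1.2])
    rw [hb k hk, hb (k + 1) (by omega), hAA]
    have h1p : (0:ℝ) < a (k + 1) := by linarith [hA1.1]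
    have h2p : (0:ℝ) < a (k + 2) := by linarith [hA2.1]
    field_simp
    linear_combination Real.sqrt (2 - a (k + 1)) * s2 -
      Real.sqrt (2 - a (k + 1)) * hs'
  -- closed form for c
  have hcf : ∀ k ≥ 1, c k = (1 - b k) / (1 + b k) := by
    intro k hk
    induction k, hk using Nat.le_induction with
    | base =>
      have hb1 : b 1 = Real.sqrt 2 - 1 := by
        rw [hb 1 le_rfl, ha 1 le_rfl, ha1]
        have hApos : (0:ℝ) < Real.sqrt (2 + Real.sqrt 2) :=
          Real.sqrt_pos.2 (by nlinarith [Real.sqrt_nonneg 2])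
        rw [div_eq_iff (ne_of_gt hApos)]
        have hA : Real.sqrt (2 + Real.sqrt 2) ^ 2 = 2 + Real.sqrt 2 :=
          Real.sq_sqrt (by positivity)
        have h12 : 1 < Real.sqrt 2 := by nlinarith [h2, Real.sqrt_nonneg 2]
        have hnn : 0 ≤ (Real.sqrt 2 - 1) * Real.sqrt (2 + Real.sqrt 2) := by
          apply mul_nonneg (by linarith) hApos.le
        rw [show (Real.sqrt 2 - 1) * Real.sqrt (2 + Real.sqrt 2)
            = Real.sqrt (((Real.sqrt 2 - 1) * Real.sqrt (2 + Real.sqrt 2)) ^ 2) from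
          (Real.sqrt_sq hnn).symm]
        congr 1
        linear_combination (-(Real.sqrt 2 - 1) ^ 2) * hA - Real.sqrt 2 * h2
      rw [hc1, hb1]
      have h12 : 1 < Real.sqrt 2 := by nlinarith [h2, Real.sqrt_nonneg 2]
      rw [eq_div_iff (by intro h; nlinarith)]
      linear_combination h2
    | succ n hn ih =>
      have hbn := hbB n hn
      have hbn1 := hbB (n + 1) (by omega)
      have hk' := hkey n hn
      have h1b : (0:ℝ) < 1 + b n := by linarith [hbn.1]
      have h1b1 : (0:ℝ) < 1 + b (n + 1) := by linarith [hbn1.1]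
      have hclt : (1 - b n) / (1 + b n) < 1 := by
        rw [div_lt_one h1b]; linarith [hbn.1]
      have hcpos : 0 < (1 - b n) / (1 + b n) :=
        div_pos (by linarith [hbn.2]) h1b
      have hden : (0:ℝ) < 1 - (1 - b n) / (1 + b n) * b (n + 1) := by
        nlinarith [hbn1.1, hbn1.2, hcpos, hclt]
      rw [hc n hn, ih]
      rw [div_eq_div_iff (ne_of_gt hden) (ne_of_gt h1b1)]
      field_simp
      linear_combination (-2 : ℝ) * hk'
  -- conclusion
  constructor
  · intro k hk
    have hb1 := hbB k hk
    have hb2 := hbB (k + 1) (by omega)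
    have hk' := hkey k hk
    have hlt : b (k + 1) < b k := by
      nlinarith [hb1.1, hb2.1, hb2.2, sq_nonneg (b (k + 1))]
    rw [hcf k hk, hcf (k + 1) (by omega)]
    rw [div_lt_div_iff₀ (by linarith [hb1.1]) (by linarith [hb2.1])]
    nlinarith [hlt]
  · intro k hk
    have hb1 := hbB k hk
    rw [hcf k hk]
    constructor
    · exact div_pos (by linarith [hb1.2]) (by linarith [hb1.1])
    · rw [div_lt_one (by linarith [hb1.1])]; linarith [hb1.1]
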